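/- Let (Ω, F, P) be a probability space and let Z, W be real-valued random variables with W ≥ 0 a.s. Suppose that for positive constants β, c₁, c₂ we have E[exp(β Z²)] < ∞ and P(W < δ) ≥ c₁ exp(-c₂/δ²) for all sufficiently small δ > 0. Then for every ε > 0, lim_{δ↓0} P(Z ≥ ε δ^{-3/2} | W < δ) = 0. -/

import Mathlib

open MeasureTheory Filter

/-- If `E[exp(β Z²)] < ∞` and `P(W < δ) ≥ c₁ exp(-c₂/δ²)` for all small `δ > 0`
(with `W ≥ 0` a.s.), then for every `ε > 0`,
`lim_{δ↓0} P(Z ≥ ε δ^{-3/2} | W < δ) = 0`. -/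
theorem stmt3 {Ω : Type*} [MeasurableSpace Ω] (P : Measure Ω) [IsProbabilityMeasure P]
    (Z W : Ω → ℝ) (hW : ∀ᵐ ω ∂P, 0 ≤ W ω)
    (β c₁ c₂ : ℝ) (hβ : 0 < β) (hc₁ : 0 < c₁) (hc₂ : 0 < c₂)
    (hint : Integrable (fun ω => Real.exp (β * Z ω ^ 2)) P)
    (hsmall : ∃ δ₀ > (0 : ℝ), ∀ δ ∈ Set.Ioc (0 : ℝ) δ₀,
      ENNReal.ofReal (c₁ * Real.exp (-c₂ / δ ^ 2)) ≤ P {ω | W ω < δ})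
    (ε : ℝ) (hε : 0 < ε) :
    Tendsto (fun δ : ℝ =>
        (P ({ω | ε * δ ^ (-(3 : ℝ) / 2) ≤ Z ω} ∩ {ω | W ω < δ})).toReal
          / (P {ω | W ω < δ}).toReal)
      (nhdsWithin 0 (Set.Ioi 0)) (nhds 0) := by
  obtain ⟨δ₀, hδ₀, hsm⟩ := hsmall
  set C := ∫ ω, Real.exp (β * Z ω ^ 2) ∂P with hCdef
  have hC0 : 0 ≤ C := integral_nonneg fun ω => (Real.exp_pos _).le
  -- numerator bound (Chernoff)
  have hnum : ∀ δ : ℝ, 0 < δ →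
      (P ({ω | ε * δ ^ (-(3 : ℝ) / 2) ≤ Z ω} ∩ {ω | W ω < δ})).toReal
        ≤ C * Real.exp (-(β * (ε * δ ^ (-(3 : ℝ) / 2)) ^ 2)) := by
    intro δ hδ
    set a := ε * δ ^ (-(3 : ℝ) / 2) with ha
    have ha0 : 0 < a := mul_pos hε (Real.rpow_pos_of_pos hδ _)
    have hsub : {ω | a ≤ Z ω} ∩ {ω | W ω < δ} ⊆
        {ω | ENNReal.ofReal (Real.exp (β * a ^ 2))
          ≤ ENNReal.ofReal (Real.exp (β * Z ω ^ 2))} := by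
      rintro ω ⟨h1, _⟩
      simp only [Set.mem_setOf_eq] at h1 ⊢
      refine ENNReal.ofReal_le_ofReal (Real.exp_le_exp.mpr ?_)
      exact mul_le_mul_of_nonneg_left (pow_le_pow_left₀ ha0.le h1 2) hβ.le
    have hmeas : AEMeasurable (fun ω => ENNReal.ofReal (Real.exp (β * Z ω ^ 2))) P :=
      hint.aestronglyMeasurable.aemeasurable.ennreal_ofReal
    have hmk := meas_ge_le_lintegral_div hmeas
      (ne_of_gt (ENNReal.ofReal_pos.mpr (Real.exp_pos (β * a ^ 2))))
      ENNReal.ofReal_ne_top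
    have hlint : (∫⁻ ω, ENNReal.ofReal (Real.exp (β * Z ω ^ 2)) ∂P)
        = ENNReal.ofReal C := by
      rw [hCdef, MeasureTheory.ofReal_integral_eq_lintegral_ofReal hint
        (Filter.Eventually.of_forall fun ω => (Real.exp_pos _).le)]
    have hle : P ({ω | a ≤ Z ω} ∩ {ω | W ω < δ})
        ≤ ENNReal.ofReal (C / Real.exp (β * a ^ 2)) := by
      calc P ({ω | a ≤ Z ω} ∩ {ω | W ω < δ})
          ≤ P {ω | ENNReal.ofReal (Real.exp (β * a ^ 2))
              ≤ ENNReal.ofReal (Real.exp (β * Z ω ^ 2))} := measure_mono hsub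
        _ ≤ (∫⁻ ω, ENNReal.ofReal (Real.exp (β * Z ω ^ 2)) ∂P)
              / ENNReal.ofReal (Real.exp (β * a ^ 2)) := hmk
        _ = ENNReal.ofReal (C / Real.exp (β * a ^ 2)) := by
              rw [hlint, ENNReal.ofReal_div_of_pos (Real.exp_pos _)]
    have := ENNReal.toReal_le_of_le_ofReal
      (div_nonneg hC0 (Real.exp_pos _).le) hle
    calc (P ({ω | a ≤ Z ω} ∩ {ω | W ω < δ})).toReal
        ≤ C / Real.exp (β * a ^ 2) := this
      _ = C * Real.exp (-(β * a ^ 2)) := by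
          rw [Real.exp_neg, div_eq_mul_inv]
  -- denominator bound
  have hden : ∀ δ ∈ Set.Ioc (0 : ℝ) δ₀,
      c₁ * Real.exp (-c₂ / δ ^ 2) ≤ (P {ω | W ω < δ}).toReal := by
    intro δ hδ
    have h := ENNReal.toReal_mono (measure_ne_top P _) (hsm δ hδ)
    rwa [ENNReal.toReal_ofReal (by positivity)] at h
  have hdenpos : ∀ δ : ℝ, 0 < δ → 0 < c₁ * Real.exp (-c₂ / δ ^ 2) := by
    intro δ hδ; positivity
  -- the dominating function
  set g : ℝ → ℝ := fun δ =>
    (C / c₁) * Real.exp (-c₂ / δ ^ 2 * (-1) - β * (ε * δ ^ (-(3 : ℝ) / 2)) ^ 2)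
    with hgdef
  have hratio : ∀ δ ∈ Set.Ioc (0 : ℝ) δ₀,
      (P ({ω | ε * δ ^ (-(3 : ℝ) / 2) ≤ Z ω} ∩ {ω | W ω < δ})).toReal
          / (P {ω | W ω < δ}).toReal ≤ g δ := by
    intro δ hδ
    have h1 := hnum δ hδ.1
    have h2 := hden δ hδ
    have h3 := hdenpos δ hδ.1
    have hgδ : g δ = (C * Real.exp (-(β * (ε * δ ^ (-(3 : ℝ) / 2)) ^ 2)))
        / (c₁ * Real.exp (-c₂ / δ ^ 2)) := by
      rw [hgdef]
      rw [mul_div_mul_comm (a := C), ← Real.exp_sub]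
      ring_nf
    rw [hgδ]
    exact div_le_div₀ (by positivity) h1 h3 h2
  -- g tends to 0
  have hgtendsto : Tendsto g (nhdsWithin 0 (Set.Ioi 0)) (nhds 0) := by
    have hexp : Tendsto
        (fun δ : ℝ => -c₂ / δ ^ 2 * (-1) - β * (ε * δ ^ (-(3 : ℝ) / 2)) ^ 2)
        (nhdsWithin 0 (Set.Ioi 0)) atBot := by
      have heq : ∀ δ : ℝ, 0 < δ →
          -c₂ / δ ^ 2 * (-1) - β * (ε * δ ^ (-(3 : ℝ) / 2)) ^ 2
            = (δ ^ 3)⁻¹ * (c₂ * δ - β * ε ^ 2) := by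
        intro δ hδ
        have h32 : (δ ^ (-(3 : ℝ) / 2)) ^ 2 = (δ ^ 3)⁻¹ := by
          rw [← Real.rpow_natCast (δ ^ (-(3 : ℝ) / 2)) 2, ← Real.rpow_mul hδ.le]
          norm_num
        have hδ3 : (0 : ℝ) < δ ^ 3 := by positivity
        rw [mul_pow, h32]
        field_simp [h32, mul_pow]
      have hA : Tendsto (fun δ : ℝ => (δ ^ 3)⁻¹) (nhdsWithin 0 (Set.Ioi 0)) atTop := by
        apply Filter.Tendsto.inv_tendsto_nhdsGT_zero
        rw [tendsto_nhdsWithin_iff]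
        constructor
        · have : Tendsto (fun δ : ℝ => δ ^ 3) (nhds 0) (nhds (0 ^ 3)) :=
            (continuous_pow 3).tendsto 0
          simpa using this.mono_left nhdsWithin_le_nhds
        · filter_upwards [self_mem_nhdsWithin] with δ hδ
          exact Set.mem_Ioi.mpr (pow_pos (Set.mem_Ioi.mp hδ) 3)
      have hB : Tendsto (fun δ : ℝ => c₂ * δ - β * ε ^ 2)
          (nhdsWithin 0 (Set.Ioi 0)) (nhds (-(β * ε ^ 2))) := by
        have : Tendsto (fun δ : ℝ => c₂ * δ - β * ε ^ 2) (nhds 0)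
            (nhds (c₂ * 0 - β * ε ^ 2)) := by
          exact Tendsto.sub_const (tendsto_const_nhds.mul tendsto_id) _
        simpa using this.mono_left nhdsWithin_le_nhds
      have hAB := hA.atTop_mul_neg (neg_lt_zero.mpr (by positivity)) hB
      refine hAB.congr' ?_
      filter_upwards [self_mem_nhdsWithin] with δ hδ
      exact (heq δ hδ).symm
    have := (Real.tendsto_exp_atBot.comp hexp).const_mul (C / c₁)
    simpa [hgdef] using this
  -- squeeze
  refine tendsto_of_tendsto_of_tendsto_of_le_of_le' tendsto_const_nhds hgtendsto ?_ ?_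
  · filter_upwards with δ
    positivity
  · filter_upwards [Ioc_mem_nhdsGT_of_mem ⟨le_refl 0, hδ₀⟩] with δ hδ
    exact hratio δ hδ
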